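/- arXiv:1708.01934 — 2 statements merged into one kernel-verified Lean document; each statement's English description precedes it below -/
import Mathlib

section
/- Let X and Y be compact metrizable abelian topological groups with Haar probability measures μ_X and μ_Y, and let a ∈ X, b ∈ Y be elements such that the rotations T : x ↦ x + a and S : y ↦ y + b are ergodic (equivalently, {na : n ∈ ℤ} is dense in X and {nb : n ∈ ℤ} is dense in Y). Let H be the closure in X × Y of the subgroup {(na, nb) : n ∈ ℤ}. Then every ergodic joining λ of the ℤ systems (X, T, μ_X) and (Y, S, μ_Y) is the Haar measure of a coset of H: there exists (x₀, y₀) ∈ X × Y such that λ is the pushforward of the Haar probability measure of H under the map h ↦ (x₀, y₀) + h. -/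
open MeasureTheory Filter Topology

section ZDefs

variable {X Y : Type*} [MeasurableSpace X] [MeasurableSpace Y]

/-- A joining of two `ℤ` systems: a probability measure on the product, invariant under the
diagonal transformation, whose marginals are the two given measures. -/
def IsJoiningZ (T : X → X) (S : Y → Y) (μX : Measure X) (μY : Measure Y)
    (ν : Measure (X × Y)) : Prop :=
  IsProbabilityMeasure ν ∧ MeasurePreserving (Prod.map T S) ν ν ∧
    ν.map Prod.fst = μX ∧ ν.map Prod.snd = μY

/-- `f ∈ L²(X, μ)` is almost periodic if the orbit `{f ∘ Tⁿ : n ∈ ℤ}` has compact closure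
in the norm topology of `L²(X, μ)`. -/
def AlmostPeriodicZ (T : X ≃ X) (μ : Measure X) (f : Lp ℂ 2 μ) : Prop :=
  IsCompact (closure {h : Lp ℂ 2 μ | ∃ n : ℤ, (h : X → ℂ) =ᵐ[μ] fun x => f ((T ^ n) x)})

/-- The joining `ν` projects to the product measure on the product of the Kronecker factors. -/
def ProjectsToKroneckerProductZ (T : X ≃ X) (S : Y ≃ Y) (μX : Measure X) (μY : Measure Y)
    (ν : Measure (X × Y)) : Prop :=
  ∀ (f : Lp ℂ 2 μX) (h : Lp ℂ 2 μY), AlmostPeriodicZ T μX f → AlmostPeriodicZ S μY h →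
    ∫ p, f p.1 * h p.2 ∂ν = (∫ x, f x ∂μX) * (∫ y, h y ∂μY)

/-- Two `ℤ` systems are Kronecker disjoint if every joining projects to the product measure on
the product of the Kronecker factors. -/
def KroneckerDisjointZ (T : X ≃ X) (S : Y ≃ Y) (μX : Measure X) (μY : Measure Y) : Prop :=
  ∀ ν : Measure (X × Y), IsJoiningZ (⇑T) (⇑S) μX μY ν →
    ProjectsToKroneckerProductZ T S μX μY ν

/-- Ergodicity of a `ℤ` system: every invariant Borel set is null or conull. -/
def ErgodicZ (T : X → X) (μ : Measure X) : Prop :=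
  ∀ A : Set X, MeasurableSet A → T ⁻¹' A = A → μ A = 0 ∨ μ A = 1

/-- The discrete spectrum of a `ℤ` system: the set of eigenvalues of the Koopman operator. -/
def EigSet (T : X → X) (μ : Measure X) : Set ℂ :=
  {ζ : ℂ | ∃ f : Lp ℂ 2 μ, f ≠ 0 ∧ (fun x => (f : X → ℂ) (T x)) =ᵐ[μ] fun x => ζ * f x}

end ZDefs

/-- A function `w : ℕ → ℂ` is strongly `q`-multiplicative if `w 0 = 1` and `w n` is the product
of the values of `w` at the base-`q` digits of `n`. -/
def StronglyQMultiplicative (q : ℕ) (w : ℕ → ℂ) : Prop :=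
  w 0 = 1 ∧ ∀ n : ℕ, w n = ((Nat.digits q n).map w).prod

open scoped ENNReal NNReal


section AuxLemmas

variable {G : Type*} [AddCommGroup G] [TopologicalSpace G] [IsTopologicalAddGroup G]
  [CompactSpace G] [TopologicalSpace.MetrizableSpace G] [MeasurableSpace G] [BorelSpace G]

/-- If a finite measure on a compact metrizable abelian group is invariant under translation by
`g`, then it is invariant under translation by every element of the closure of `⟨g⟩`. -/
lemma map_add_left_eq_of_mem_closure (ν : Measure G) [IsFiniteMeasure ν] (g : G)
    (hg : Measure.map (fun x => g + x) ν = ν) {h : G}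
    (hh : h ∈ (AddSubgroup.zmultiples g).topologicalClosure) :
    Measure.map (fun x => h + x) ν = ν := by
  set S : Set G := {u : G | Measure.map (fun x => u + x) ν = ν} with hSdef
  have hmeas : ∀ u : G, Measurable fun x : G => u + x := fun u =>
    (continuous_const.add continuous_id).measurable
  have hzero : (0 : G) ∈ S := by
    have : (fun x : G => (0 : G) + x) = id := by funext x; simp
    simp only [hSdef, Set.mem_setOf_eq, this, Measure.map_id]
  have hadd : ∀ {u v : G}, u ∈ S → v ∈ S → u + v ∈ S := by
    intro u v hu hv
    have hcomp : (fun x : G => (u + v) + x) = (fun x => u + x) ∘ fun x => v + x := by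
      funext x; simp [add_assoc]
    show Measure.map _ ν = ν
    rw [hcomp, ← Measure.map_map (hmeas u) (hmeas v), hv, hu]
  have hneg : ∀ {u : G}, u ∈ S → -u ∈ S := by
    intro u hu
    have h1 : ((fun x : G => -u + x) ∘ fun x => u + x) = id := by funext x; simp
    have h2 := congrArg (Measure.map fun x : G => -u + x) hu
    rw [Measure.map_map (hmeas (-u)) (hmeas u), h1, Measure.map_id] at h2
    exact h2.symm
  have hSclosed : IsClosed S := by
    apply IsSeqClosed.isClosed
    intro x p hx hxp
    show Measure.map (fun y : G => p + y) ν = ν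
    haveI : IsFiniteMeasure (Measure.map (fun y : G => p + y) ν) :=
      Measure.isFiniteMeasure_map ν _
    apply MeasureTheory.ext_of_forall_lintegral_eq_of_IsFiniteMeasure
    intro f
    have hfm : Measurable fun y : G => (f y : ℝ≥0∞) :=
      (ENNReal.continuous_coe.comp f.continuous).measurable
    rw [lintegral_map hfm (hmeas p)]
    have key : ∀ n, ∫⁻ y, (f (x n + y) : ℝ≥0∞) ∂ν = ∫⁻ y, (f y : ℝ≥0∞) ∂ν := by
      intro n
      conv_rhs => rw [← hx n]
      rw [lintegral_map hfm (hmeas (x n))]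
    have hbound : ∀ z : G, (f z : ℝ≥0∞) ≤ ((nndist 0 f : ℝ≥0) : ℝ≥0∞) := by
      intro z
      exact_mod_cast f.apply_le_nndist_zero z
    have hlim : Tendsto (fun n => ∫⁻ y, (f (x n + y) : ℝ≥0∞) ∂ν) atTop
        (𝓝 (∫⁻ y, (f (p + y) : ℝ≥0∞) ∂ν)) := by
      apply tendsto_lintegral_of_dominated_convergence (fun _ => ((nndist 0 f : ℝ≥0) : ℝ≥0∞))
      · intro n
        exact (ENNReal.continuous_coe.comp
          (f.continuous.comp (continuous_const.add continuous_id))).measurable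
      · intro n
        exact Eventually.of_forall fun y => hbound _
      · rw [lintegral_const]
        exact ENNReal.mul_ne_top ENNReal.coe_ne_top (measure_ne_top ν _)
      · apply Eventually.of_forall
        intro y
        have h1 : Tendsto (fun n => x n + y) atTop (𝓝 (p + y)) :=
          hxp.add tendsto_const_nhds
        exact (ENNReal.continuous_coe.tendsto _).comp ((f.continuous.tendsto _).comp h1)
    simp only [key] at hlim
    exact (tendsto_nhds_unique tendsto_const_nhds hlim).symm
  let K : AddSubgroup G :=
    { carrier := S
      add_mem' := fun hu hv => hadd hu hv
      zero_mem' := hzero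
      neg_mem' := fun hu => hneg hu }
  have hle : (AddSubgroup.zmultiples g).topologicalClosure ≤ K :=
    AddSubgroup.topologicalClosure_minimal _ (AddSubgroup.zmultiples_le.mpr hg) hSclosed
  exact hle hh

/-- If the pushforward of a probability measure on a compact metrizable space along a continuous
map to a compact Hausdorff space takes only the values `0` and `1`, then some fiber is conull. -/
lemma exists_conull_fiber {G Q : Type*}
    [TopologicalSpace G] [CompactSpace G] [TopologicalSpace.MetrizableSpace G]
    [MeasurableSpace G] [BorelSpace G]
    [TopologicalSpace Q] [CompactSpace Q] [T2Space Q]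
    [MeasurableSpace Q] [BorelSpace Q]
    (q : G → Q) (hq : Continuous q) (ν : Measure G) [IsProbabilityMeasure ν]
    (hzo : ∀ B : Set Q, MeasurableSet B → ν (q ⁻¹' B) = 0 ∨ ν (q ⁻¹' B) = 1) :
    ∃ c : Q, ν (q ⁻¹' {c}) = 1 := by
  classical
  set 𝒞 : Set (Set Q) := {F | IsClosed F ∧ ν (q ⁻¹' F) = 1} with h𝒞
  have huniv : Set.univ ∈ 𝒞 := ⟨isClosed_univ, by simp⟩
  haveI : Nonempty 𝒞 := ⟨⟨Set.univ, huniv⟩⟩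
  have hconull : ∀ F ∈ 𝒞, ν (q ⁻¹' F)ᶜ = 0 := by
    intro F hF
    rw [prob_compl_eq_one_sub ((hF.1.measurableSet).preimage hq.measurable), hF.2]
    simp
  have hne : ∀ F ∈ 𝒞, F.Nonempty := by
    intro F hF
    rcases Set.eq_empty_or_nonempty F with h | h
    · exfalso
      have := hF.2
      rw [h] at this
      simp at this
    · exact h
  have hinter : ∀ F₁ ∈ 𝒞, ∀ F₂ ∈ 𝒞, F₁ ∩ F₂ ∈ 𝒞 := by
    intro F₁ h₁ F₂ h₂
    refine ⟨h₁.1.inter h₂.1, ?_⟩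
    have hmeasint : MeasurableSet (q ⁻¹' (F₁ ∩ F₂)) :=
      ((h₁.1.inter h₂.1).measurableSet).preimage hq.measurable
    rw [← prob_compl_eq_zero_iff hmeasint,
      show (q ⁻¹' (F₁ ∩ F₂))ᶜ = (q ⁻¹' F₁)ᶜ ∪ (q ⁻¹' F₂)ᶜ by
        rw [Set.preimage_inter, Set.compl_inter]]
    exact measure_union_null (hconull F₁ h₁) (hconull F₂ h₂)
  have hdir : DirectedOn (· ⊇ ·) 𝒞 := by
    intro F₁ h₁ F₂ h₂
    exact ⟨F₁ ∩ F₂, hinter F₁ h₁ F₂ h₂, Set.inter_subset_left, Set.inter_subset_right⟩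
  have hCne : (⋂₀ 𝒞).Nonempty :=
    IsCompact.nonempty_sInter_of_directed_nonempty_isCompact_isClosed hdir hne
      (fun F hF => hF.1.isCompact) fun F hF => hF.1
  obtain ⟨c, hc⟩ := hCne
  refine ⟨c, ?_⟩
  by_contra hcon
  have h0 : ν (q ⁻¹' {c}) = 0 :=
    (hzo {c} (measurableSet_singleton c)).resolve_right hcon
  have hV : ν (q ⁻¹' ({c}ᶜ)) = 1 := by
    rw [Set.preimage_compl, prob_compl_eq_one_sub
      ((measurableSet_singleton c).preimage hq.measurable), h0]
    simp
  have hVopen : IsOpen (q ⁻¹' ({c}ᶜ)) := (isOpen_compl_singleton).preimage hq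
  obtain ⟨F₀, hF₀sub, hF₀closed, hF₀pos⟩ :=
    hVopen.exists_lt_isClosed (show (0 : ℝ≥0∞) < ν (q ⁻¹' ({c}ᶜ)) by rw [hV]; norm_num)
  set K := q '' F₀ with hK
  have hKcompact : IsCompact K := (hF₀closed.isCompact).image hq
  have hKclosed : IsClosed K := hKcompact.isClosed
  have hKpos : ν (q ⁻¹' K) ≠ 0 := by
    intro h0'
    have hsub : ν F₀ ≤ ν (q ⁻¹' K) := measure_mono (Set.subset_preimage_image q F₀)
    rw [h0'] at hsub
    exact hF₀pos.ne' (le_antisymm hsub zero_le)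
  have hK1 : ν (q ⁻¹' K) = 1 :=
    (hzo K (hKclosed.measurableSet)).resolve_left hKpos
  have hKmem : K ∈ 𝒞 := ⟨hKclosed, hK1⟩
  have hcK : c ∈ K := hc K hKmem
  obtain ⟨x, hxF₀, hxc⟩ := hcK
  exact (hF₀sub hxF₀) hxc

end AuxLemmas

/-- Every ergodic joining of two ergodic rotations on compact metrizable
abelian groups is the Haar measure of a coset of the closure `H` of `{(na, nb) : n ∈ ℤ}`. -/
theorem ergodic_joining_of_group_rotations_is_Haar_on_coset
    {X : Type*} [AddCommGroup X] [TopologicalSpace X] [IsTopologicalAddGroup X]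
    [CompactSpace X] [TopologicalSpace.MetrizableSpace X] [MeasurableSpace X] [BorelSpace X]
    {Y : Type*} [AddCommGroup Y] [TopologicalSpace Y] [IsTopologicalAddGroup Y]
    [CompactSpace Y] [TopologicalSpace.MetrizableSpace Y] [MeasurableSpace Y] [BorelSpace Y]
    -- Haar probability measures
    (μX : Measure X) (hXprob : IsProbabilityMeasure μX)
    (hXhaar : ∀ c : X, MeasurePreserving (fun x => c + x) μX μX)
    (μY : Measure Y) (hYprob : IsProbabilityMeasure μY)
    (hYhaar : ∀ c : Y, MeasurePreserving (fun y => c + y) μY μY)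
    -- ergodic rotations, i.e. dense cyclic subgroups
    (a : X) (b : Y)
    (ha : DenseRange fun n : ℤ => n • a)
    (hb : DenseRange fun n : ℤ => n • b)
    -- an ergodic joining
    (ν : Measure (X × Y))
    (hν : IsJoiningZ (fun x => a + x) (fun y => b + y) μX μY ν)
    (hνerg : ∀ A : Set (X × Y), MeasurableSet A →
      (Prod.map (fun x => a + x) (fun y => b + y)) ⁻¹' A = A → ν A = 0 ∨ ν A = 1) :
    ∃ (p₀ : X × Y)
      (μH : Measure (AddSubgroup.topologicalClosure (AddSubgroup.zmultiples (a, b)))),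
      IsProbabilityMeasure μH ∧
      (∀ h₀ : AddSubgroup.topologicalClosure (AddSubgroup.zmultiples (a, b)),
        MeasurePreserving (fun h => h₀ + h) μH μH) ∧
      ν = μH.map fun h : AddSubgroup.topologicalClosure (AddSubgroup.zmultiples (a, b)) =>
        p₀ + (h : X × Y) := by

  classical
  obtain ⟨hνprob, hνmp, hfst, hsnd⟩ := hν
  haveI := hνprob
  set g : X × Y := (a, b) with hgdef
  set H : AddSubgroup (X × Y) := AddSubgroup.topologicalClosure (AddSubgroup.zmultiples (a, b))
    with hHdef
  have hHclosed : IsClosed (H : Set (X × Y)) := AddSubgroup.isClosed_topologicalClosure _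
  haveI : IsClosed (H : Set (X × Y)) := hHclosed
  -- translation by `g` preserves `ν`
  have hmap_g : Measure.map (fun p : X × Y => g + p) ν = ν := by
    have heq : (fun p : X × Y => g + p)
        = Prod.map (fun x => a + x) (fun y => b + y) := by
      funext p; rfl
    rw [heq]
    exact hνmp.map_eq
  have hHinv : ∀ h : X × Y, h ∈ H → Measure.map (fun x => h + x) ν = ν := fun h hh =>
    map_add_left_eq_of_mem_closure ν g hmap_g hh
  have hgH : g ∈ H := AddSubgroup.le_topologicalClosure _ (AddSubgroup.mem_zmultiples g)
  -- quotient by `H`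
  set Q := (X × Y) ⧸ H with hQdef
  borelize Q
  set q : X × Y → Q := QuotientAddGroup.mk with hqdef
  have hqcont : Continuous q := continuous_quot_mk
  have hqmeas : Measurable q := hqcont.measurable
  have hzo : ∀ B : Set Q, MeasurableSet B → ν (q ⁻¹' B) = 0 ∨ ν (q ⁻¹' B) = 1 := by
    intro B hB
    apply hνerg _ (hqmeas hB)
    ext p
    have hqg : q (g + p) = q p := by
      rw [QuotientAddGroup.eq_iff_sub_mem]
      simpa using hgH
    simp only [Set.mem_preimage]
    show q (g + p) ∈ B ↔ q p ∈ B
    rw [hqg]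
  obtain ⟨c, hc⟩ := exists_conull_fiber q hqcont ν hzo
  obtain ⟨p₀, rfl⟩ := QuotientAddGroup.mk_surjective c
  set C : Set (X × Y) := q ⁻¹' {(p₀ : Q)} with hCdef
  have hCmeas : MeasurableSet C := hqmeas (measurableSet_singleton _)
  -- the conull fiber is the coset `p₀ + H`
  set e : H → X × Y := fun h => p₀ + (h : X × Y) with hedef
  have hCrange : C = Set.range e := by
    ext x
    simp only [hCdef, Set.mem_preimage, Set.mem_singleton_iff, Set.mem_range]
    constructor
    · intro hx
      have hx' : x - p₀ ∈ H := by
        rw [← QuotientAddGroup.eq_iff_sub_mem]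
        exact hx
      exact ⟨⟨x - p₀, hx'⟩, by simp [hedef]⟩
    · rintro ⟨h, rfl⟩
      show q (p₀ + (h : X × Y)) = q p₀
      rw [QuotientAddGroup.eq_iff_sub_mem]
      simpa using h.2
  haveI : CompactSpace H := isCompact_iff_compactSpace.mp hHclosed.isCompact
  haveI : BorelSpace H := Subtype.borelSpace (H : Set (X × Y))
  have hecont : Continuous e := continuous_const.add continuous_subtype_val
  have heinj : Function.Injective e := by
    intro h₁ h₂ hx
    exact Subtype.ext (add_left_cancel hx)
  have hce : Topology.IsClosedEmbedding e := hecont.isClosedEmbedding heinj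
  have hme : MeasurableEmbedding e := hce.measurableEmbedding
  set μH : Measure H := ν.comap e with hμHdef
  have hμH_apply : ∀ s : Set H, μH s = ν (e '' s) := fun s => hme.comap_apply ν s
  have hprob : IsProbabilityMeasure μH := by
    constructor
    rw [hμH_apply, Set.image_univ, ← hCrange]
    exact hc
  refine ⟨p₀, μH, hprob, ?_, ?_⟩
  · -- translation invariance
    intro h₀
    have hτc : Continuous fun h : H => h₀ + h := continuous_const.add continuous_id
    refine ⟨hτc.measurable, ?_⟩
    ext A hA
    rw [Measure.map_apply hτc.measurable hA, hμH_apply, hμH_apply]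
    have hset : e '' ((fun h : H => h₀ + h) ⁻¹' A)
        = (fun x : X × Y => (h₀ : X × Y) + x) ⁻¹' (e '' A) := by
      ext x
      simp only [Set.mem_image, Set.mem_preimage]
      constructor
      · rintro ⟨h, hh, rfl⟩
        refine ⟨h₀ + h, hh, ?_⟩
        show p₀ + ((h₀ + h : H) : X × Y) = (h₀ : X × Y) + (p₀ + (h : X × Y))
        rw [show ((h₀ + h : H) : X × Y) = (h₀ : X × Y) + (h : X × Y) from rfl]
        abel
      · rintro ⟨h, hh, hx⟩
        refine ⟨-h₀ + h, by simpa using hh, ?_⟩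
        show p₀ + ((-h₀ + h : H) : X × Y) = x
        rw [show ((-h₀ + h : H) : X × Y) = -(h₀ : X × Y) + (h : X × Y) from rfl]
        have hx2 : (h₀ : X × Y) + x = p₀ + (h : X × Y) := hx.symm
        calc p₀ + (-(h₀ : X × Y) + (h : X × Y))
            = -(h₀ : X × Y) + (p₀ + (h : X × Y)) := by abel
          _ = -(h₀ : X × Y) + ((h₀ : X × Y) + x) := by rw [hx2]
          _ = x := by abel
    rw [hset]
    have hmapinv := hHinv (h₀ : X × Y) h₀.2
    have hmeas_tr : Measurable fun x : X × Y => (h₀ : X × Y) + x :=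
      (continuous_const.add continuous_id).measurable
    calc ν ((fun x : X × Y => (h₀ : X × Y) + x) ⁻¹' (e '' A))
        = (Measure.map (fun x : X × Y => (h₀ : X × Y) + x) ν) (e '' A) :=
          (Measure.map_apply hmeas_tr (hme.measurableSet_image.mpr hA)).symm
      _ = ν (e '' A) := by rw [hmapinv]
  · -- `ν` is the pushforward
    have hνC : ∀ᵐ x ∂ν, x ∈ C := by
      rw [Filter.eventually_iff, mem_ae_iff]
      have : {x : X × Y | x ∈ C}ᶜ = Cᶜ := rfl
      rw [this, prob_compl_eq_one_sub hCmeas, hc]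
      simp
    have : Measure.map e μH = ν := by
      rw [hμHdef, hme.map_comap, ← hCrange]
      exact Measure.restrict_eq_self_of_ae_mem hνC
    exact this.symm
end

section
/- Let A = (A, T_A, μ_A), B = (B, T_B, μ_B), C = (C, T_C, μ_C) and D = (D, T_D, μ_D) be G systems. If B is a factor of A via a factor map π_{A,B} : A → B and D is a factor of C via a factor map π_{C,D} : C → D, then the induced map from joinings of A and C to joinings of B and D is surjective: for every joining λ of B and D there exists a joining λ' of A and C whose pushforward under π_{A,B} × π_{C,D} equals λ. -/
open MeasureTheory Filter Topology

section Defs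

variable {G : Type*} [Group G] {X Y : Type*} [MeasurableSpace X] [MeasurableSpace Y]

/-- A joining of two `G` systems: a probability measure on the product which is invariant
under the diagonal action and has the two given measures as marginals. -/
def IsJoining (T : G → X → X) (S : G → Y → Y) (μX : Measure X) (μY : Measure Y)
    (ν : Measure (X × Y)) : Prop :=
  IsProbabilityMeasure ν ∧
    (∀ g : G, MeasurePreserving (fun p : X × Y => (T g p.1, S g p.2)) ν ν) ∧
    ν.map Prod.fst = μX ∧ ν.map Prod.snd = μY

/-- `f ∈ L²(X, μ)` is almost periodic if the orbit `{f ∘ T^g : g ∈ G}` has compact closure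
in the norm topology of `L²(X, μ)`. -/
def AlmostPeriodic (T : G → X → X) (μ : Measure X) (f : Lp ℂ 2 μ) : Prop :=
  IsCompact (closure {h : Lp ℂ 2 μ | ∃ g : G, (h : X → ℂ) =ᵐ[μ] fun x => f (T g x)})

/-- The joining `ν` projects to the product measure on the product of the Kronecker factors:
almost periodic functions of the two systems are uncorrelated under `ν`. -/
def ProjectsToKroneckerProduct (T : G → X → X) (S : G → Y → Y) (μX : Measure X)
    (μY : Measure Y) (ν : Measure (X × Y)) : Prop :=
  ∀ (f : Lp ℂ 2 μX) (h : Lp ℂ 2 μY), AlmostPeriodic T μX f → AlmostPeriodic S μY h →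
    ∫ p, f p.1 * h p.2 ∂ν = (∫ x, f x ∂μX) * (∫ y, h y ∂μY)

/-- Two `G` systems are quasi-disjoint if the only joining projecting to the product measure
on the product of the Kronecker factors is the product measure. -/
def QuasiDisjoint (T : G → X → X) (S : G → Y → Y) (μX : Measure X) (μY : Measure Y) : Prop :=
  ∀ ν : Measure (X × Y), IsJoining T S μX μY ν →
    ProjectsToKroneckerProduct T S μX μY ν → ν = μX.prod μY

/-- Two `G` systems are disjoint if the product measure is their only joining. -/
def DisjointSystems (T : G → X → X) (S : G → Y → Y) (μX : Measure X) (μY : Measure Y) : Prop :=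
  ∀ ν : Measure (X × Y), IsJoining T S μX μY ν → ν = μX.prod μY

/-- Two `G` systems are Kronecker disjoint if every joining projects to the product measure
on the product of the Kronecker factors. -/
def KroneckerDisjoint (T : G → X → X) (S : G → Y → Y) (μX : Measure X) (μY : Measure Y) :
    Prop :=
  ∀ ν : Measure (X × Y), IsJoining T S μX μY ν → ProjectsToKroneckerProduct T S μX μY ν

/-- A separating sieve for the system `(X, T, μ)`. -/
def HasSeparatingSieve (T : G → X → X) (μ : Measure X) : Prop :=
  ∃ A : ℕ → Set X, (∀ n, MeasurableSet (A n)) ∧ (∀ n, 0 < μ (A n)) ∧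
    Tendsto (fun n => μ (A n)) atTop (𝓝 0) ∧
    ∃ X' : Set X, μ X'ᶜ = 0 ∧
      ∀ x ∈ X', ∀ x' ∈ X', (∀ n : ℕ, ∃ g : G, T g x ∈ A n ∧ T g x' ∈ A n) → x = x'

/-- A factor map of `G` systems: a measurable, almost everywhere `G`-equivariant map
pushing `μX` forward to `μY`. -/
def IsFactorMap (T : G → X → X) (S : G → Y → Y) (μX : Measure X) (μY : Measure Y)
    (π : X → Y) : Prop :=
  Measurable π ∧ μX.map π = μY ∧ ∀ g : G, ∀ᵐ x ∂μX, π (T g x) = S g (π x)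

/-- Ergodicity of a `G` system: every invariant Borel set is null or conull. -/
def ErgodicSystem (T : G → X → X) (μ : Measure X) : Prop :=
  ∀ A : Set X, MeasurableSet A → (∀ g : G, T g ⁻¹' A = A) → μ A = 0 ∨ μ A = 1

end Defs

open ProbabilityTheory

lemma factor_disintegration
    {G : Type*} [Group G]
    {B : Type*} [MeasurableSpace B] [StandardBorelSpace B] [Nonempty B]
    {A : Type*} [MeasurableSpace A] [StandardBorelSpace A] [Nonempty A]
    (TA : G → A → A) (TB : G → B → B)
    (hTB1 : ∀ x, TB 1 x = x) (hTBmul : ∀ g h x, TB (g * h) x = TB g (TB h x))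
    (μA : Measure A) [IsProbabilityMeasure μA] (μB : Measure B) [IsProbabilityMeasure μB]
    (hTAμ : ∀ g, MeasurePreserving (TA g) μA μA)
    (hTBμ : ∀ g, MeasurePreserving (TB g) μB μB)
    (π : A → B) (hπ : Measurable π) (hmap : μA.map π = μB)
    (heq : ∀ g : G, ∀ᵐ x ∂μA, π (TA g x) = TB g (π x)) :
    ∃ κ : Kernel B A, IsMarkovKernel κ ∧
      (∀ s : Set A, MeasurableSet s → ∫⁻ b, κ b s ∂μB = μA s) ∧
      (∀ g : G, ∀ᵐ b ∂μB, (κ b).map (TA g) = κ (TB g b)) ∧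
      (∀ᵐ b ∂μB, (κ b).map π = Measure.dirac b) := by
  have hgr : Measurable (fun x : A => (π x, x)) := hπ.prodMk measurable_id
  set ρ : Measure (B × A) := μA.map (fun x => (π x, x)) with hρdef
  haveI : IsProbabilityMeasure ρ := Measure.isProbabilityMeasure_map hgr.aemeasurable
  have hfst : ρ.fst = μB := by
    rw [hρdef, Measure.fst, Measure.map_map measurable_fst hgr]
    exact hmap
  refine ⟨ρ.condKernel, inferInstance, ?_, ?_, ?_⟩
  · intro s hs
    have hdis := Measure.disintegrate ρ ρ.condKernel
    have : ρ (Prod.snd ⁻¹' s) = μA s := by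
      rw [hρdef, Measure.map_apply hgr (measurable_snd hs)]
      rfl
    rw [← this]
    conv_rhs => rw [← hdis]
    rw [Measure.compProd_apply (measurable_snd hs), hfst]
    rfl
  · intro g
    -- invariance of ρ under the diagonal map
    have hΦm : Measurable (fun p : B × A => (TB g p.1, TA g p.2)) :=
      ((hTBμ g).measurable.comp measurable_fst).prodMk ((hTAμ g).measurable.comp measurable_snd)
    have hρinv : ρ.map (fun p : B × A => (TB g p.1, TA g p.2)) = ρ := by
      rw [hρdef, Measure.map_map hΦm hgr]
      have hae : (fun x : A => (TB g (π x), TA g x)) =ᵐ[μA]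
          (fun x : A => (π (TA g x), TA g x)) := by
        filter_upwards [heq g] with x hx
        simp [hx]
      calc μA.map ((fun p : B × A => (TB g p.1, TA g p.2)) ∘ (fun x => (π x, x)))
          = μA.map (fun x : A => (π (TA g x), TA g x)) := Measure.map_congr hae
        _ = (μA.map (TA g)).map (fun x => (π x, x)) := by
            rw [Measure.map_map hgr (hTAμ g).measurable]; rfl
        _ = ρ := by rw [(hTAμ g).map_eq, hρdef]
    set η : Kernel B A :=
      Kernel.map (ρ.condKernel.comap (TB g⁻¹) (hTBμ g⁻¹).measurable) (TA g) with hηdef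
    haveI : IsMarkovKernel η :=
      Kernel.IsMarkovKernel.map _ (hTAμ g).measurable
    have hηapp : ∀ b (t : Set A), MeasurableSet t →
        η b t = ρ.condKernel (TB g⁻¹ b) (TA g ⁻¹' t) := by
      intro b t ht
      rw [hηdef, Kernel.map_apply' _ (hTAμ g).measurable _ ht, Kernel.comap_apply]
    have hρη : ρ = ρ.fst ⊗ₘ η := by
      ext s hs
      rw [Measure.compProd_apply hs, hfst]
      have h1 : ρ s = ρ ((fun p : B × A => (TB g p.1, TA g p.2)) ⁻¹' s) := by
        conv_lhs => rw [← hρinv]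
        rw [Measure.map_apply hΦm hs]
      rw [h1]
      have hdis := Measure.disintegrate ρ ρ.condKernel
      conv_lhs => rw [← hdis]
      rw [Measure.compProd_apply (hΦm hs), hfst]
      -- change of variables b ↦ TB g⁻¹ b
      have hF : Measurable (fun b => ρ.condKernel b
          (Prod.mk b ⁻¹' ((fun p : B × A => (TB g p.1, TA g p.2)) ⁻¹' s))) :=
        Kernel.measurable_kernel_prodMk_left (hΦm hs)
      have hcv := (hTBμ g⁻¹).lintegral_comp hF
      rw [← hcv]
      refine lintegral_congr fun b => ?_
      rw [hηapp b _ (measurable_prodMk_left hs)]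
      congr 1
      ext a
      simp only [Set.mem_preimage]
      have : TB g (TB g⁻¹ b) = b := by rw [← hTBmul, mul_inv_cancel, hTB1]
      rw [this]
    have huniq := eq_condKernel_of_measure_eq_compProd η hρη
    rw [hfst] at huniq
    have huniq2 : ∀ᵐ b ∂μB, η (TB g b) = ρ.condKernel (TB g b) :=
      ae_of_ae_map (p := fun b => η b = ρ.condKernel b)
        (hTBμ g).measurable.aemeasurable
        (by rw [(hTBμ g).map_eq]; exact huniq)
    filter_upwards [huniq2] with b hb
    have hb' : η (TB g b) = (ρ.condKernel b).map (TA g) := by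
      rw [hηdef, Kernel.map_apply _ (hTAμ g).measurable, Kernel.comap_apply]
      congr 2
      rw [← hTBmul, inv_mul_cancel, hTB1]
    rw [← hb, hb']
  · -- projection to dirac
    set ψ : B × A → B × B := fun p => (p.1, π p.2) with hψdef
    have hψm : Measurable ψ := measurable_fst.prodMk (hπ.comp measurable_snd)
    set ρ' : Measure (B × B) := ρ.map ψ with hρ'def
    haveI : IsProbabilityMeasure ρ' := Measure.isProbabilityMeasure_map hψm.aemeasurable
    have hdiagm : Measurable (fun b : B => (b, b)) := measurable_id.prodMk measurable_id
    have hρ'eq : ρ' = μB.map (fun b => (b, b)) := by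
      rw [hρ'def, hρdef, Measure.map_map hψm hgr, ← hmap,
        Measure.map_map hdiagm hπ]
      rfl
    have hfst' : ρ'.fst = μB := by
      rw [hρ'eq, Measure.fst, Measure.map_map measurable_fst hdiagm]
      have h : (Prod.fst ∘ fun b : B => (b, b)) = id := rfl
      rw [h, Measure.map_id]
    -- kernel 1 : κ.map π
    set η1 : Kernel B B := Kernel.map ρ.condKernel π with hη1def
    haveI : IsMarkovKernel η1 := Kernel.IsMarkovKernel.map _ hπ
    have h1 : ρ' = ρ'.fst ⊗ₘ η1 := by
      ext s hs
      rw [Measure.compProd_apply hs, hfst', hρ'def, Measure.map_apply hψm hs]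
      have hdis := Measure.disintegrate ρ ρ.condKernel
      conv_lhs => rw [← hdis]
      rw [Measure.compProd_apply (hψm hs), hfst]
      refine lintegral_congr fun b => ?_
      rw [hη1def, Kernel.map_apply' _ hπ _ (measurable_prodMk_left hs)]
      rfl
    -- kernel 2 : identity
    set η2 : Kernel B B := Kernel.id with hη2def
    have h2 : ρ' = ρ'.fst ⊗ₘ η2 := by
      ext s hs
      rw [Measure.compProd_apply hs, hfst', hρ'eq,
        Measure.map_apply hdiagm hs]
      have : ∀ b, η2 b (Prod.mk b ⁻¹' s) =
          Set.indicator ((fun b : B => (b, b)) ⁻¹' s) 1 b := by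
        intro b
        rw [hη2def, Kernel.id_apply, Measure.dirac_apply' _ (measurable_prodMk_left hs)]
        by_cases hb : (b, b) ∈ s <;> simp [hb]
      simp_rw [this]
      rw [lintegral_indicator_one (hdiagm hs)]
    have hu1 := eq_condKernel_of_measure_eq_compProd η1 h1
    have hu2 := eq_condKernel_of_measure_eq_compProd η2 h2
    rw [hfst'] at hu1 hu2
    filter_upwards [hu1, hu2] with b hb1 hb2
    calc (ρ.condKernel b).map π = η1 b := (Kernel.map_apply _ hπ _).symm
      _ = ρ'.condKernel b := hb1
      _ = η2 b := hb2.symm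
      _ = Measure.dirac b := Kernel.id_apply b

/-- Joinings lift through factor maps: if `B` is a factor of `A` and `D` is a
factor of `C`, then every joining of `B` and `D` is the pushforward of some joining of `A` and
`C` under the product of the factor maps. -/
theorem joinings_lift_through_factors
    {G : Type*} [Group G] [Countable G]
    {A : Type*} [MetricSpace A] [CompactSpace A] [MeasurableSpace A] [BorelSpace A]
    {B : Type*} [MetricSpace B] [CompactSpace B] [MeasurableSpace B] [BorelSpace B]
    {C : Type*} [MetricSpace C] [CompactSpace C] [MeasurableSpace C] [BorelSpace C]
    {D : Type*} [MetricSpace D] [CompactSpace D] [MeasurableSpace D] [BorelSpace D]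
    (TA : G → A → A) (hTA1 : ∀ x, TA 1 x = x)
    (hTAmul : ∀ g h x, TA (g * h) x = TA g (TA h x))
    (hTAcont : ∀ g, Continuous (TA g))
    (μA : Measure A) (hAprob : IsProbabilityMeasure μA)
    (hTAμ : ∀ g, MeasurePreserving (TA g) μA μA)
    (TB : G → B → B) (hTB1 : ∀ x, TB 1 x = x)
    (hTBmul : ∀ g h x, TB (g * h) x = TB g (TB h x))
    (hTBcont : ∀ g, Continuous (TB g))
    (μB : Measure B) (hBprob : IsProbabilityMeasure μB)
    (hTBμ : ∀ g, MeasurePreserving (TB g) μB μB)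
    (TC : G → C → C) (hTC1 : ∀ x, TC 1 x = x)
    (hTCmul : ∀ g h x, TC (g * h) x = TC g (TC h x))
    (hTCcont : ∀ g, Continuous (TC g))
    (μC : Measure C) (hCprob : IsProbabilityMeasure μC)
    (hTCμ : ∀ g, MeasurePreserving (TC g) μC μC)
    (TD : G → D → D) (hTD1 : ∀ x, TD 1 x = x)
    (hTDmul : ∀ g h x, TD (g * h) x = TD g (TD h x))
    (hTDcont : ∀ g, Continuous (TD g))
    (μD : Measure D) (hDprob : IsProbabilityMeasure μD)
    (hTDμ : ∀ g, MeasurePreserving (TD g) μD μD)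
    (πAB : A → B) (hπAB : IsFactorMap TA TB μA μB πAB)
    (πCD : C → D) (hπCD : IsFactorMap TC TD μC μD πCD) :
    ∀ ν : Measure (B × D), IsJoining TB TD μB μD ν →
      ∃ ν' : Measure (A × C), IsJoining TA TC μA μC ν' ∧
        ν'.map (Prod.map πAB πCD) = ν := by
  intro ν hν
  haveI := hAprob; haveI := hBprob; haveI := hCprob; haveI := hDprob
  haveI : Nonempty A := by
    rcases isEmpty_or_nonempty A with h | h
    · exfalso
      have h1 := hAprob.measure_univ
      rw [Set.univ_eq_empty_iff.mpr h] at h1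
      simp at h1
    · exact h
  haveI : Nonempty B := by
    rcases isEmpty_or_nonempty B with h | h
    · exfalso
      have h1 := hBprob.measure_univ
      rw [Set.univ_eq_empty_iff.mpr h] at h1
      simp at h1
    · exact h
  haveI : Nonempty C := by
    rcases isEmpty_or_nonempty C with h | h
    · exfalso
      have h1 := hCprob.measure_univ
      rw [Set.univ_eq_empty_iff.mpr h] at h1
      simp at h1
    · exact h
  haveI : Nonempty D := by
    rcases isEmpty_or_nonempty D with h | h
    · exfalso
      have h1 := hDprob.measure_univ
      rw [Set.univ_eq_empty_iff.mpr h] at h1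
      simp at h1
    · exact h
  obtain ⟨hνprob, hνinv, hν1, hν2⟩ := hν
  haveI := hνprob
  obtain ⟨hπABm, hπABmap, hπABeq⟩ := hπAB
  obtain ⟨hπCDm, hπCDmap, hπCDeq⟩ := hπCD
  obtain ⟨κA, hκAmk, hκAint, hκAequiv, hκAproj⟩ :=
    factor_disintegration TA TB hTB1 hTBmul μA μB hTAμ hTBμ πAB hπABm hπABmap hπABeq
  obtain ⟨κC, hκCmk, hκCint, hκCequiv, hκCproj⟩ :=
    factor_disintegration TC TD hTD1 hTDmul μC μD hTCμ hTDμ πCD hπCDm hπCDmap hπCDeq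
  haveI := hκAmk; haveI := hκCmk
  set k : Kernel (B × D) (A × C) :=
    (κA.comap Prod.fst measurable_fst).prod (κC.comap Prod.snd measurable_snd) with hkdef
  haveI : IsMarkovKernel k := by rw [hkdef]; infer_instance
  have hkapp : ∀ p : B × D, k p = (κA p.1).prod (κC p.2) := by
    intro p
    rw [hkdef, Kernel.prod_apply, Kernel.comap_apply, Kernel.comap_apply]
  set ν' : Measure (A × C) := (ν.compProd k).map Prod.snd with hν'def
  have hν'app : ∀ s : Set (A × C), MeasurableSet s →
      ν' s = ∫⁻ p, (κA p.1).prod (κC p.2) s ∂ν := by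
    intro s hs
    rw [hν'def, Measure.map_apply measurable_snd hs,
      Measure.compProd_apply (measurable_snd hs)]
    refine lintegral_congr fun p => ?_
    rw [hkapp]
    rfl
  haveI hν'prob : IsProbabilityMeasure ν' := by
    constructor
    rw [hν'app _ MeasurableSet.univ]
    simp
  -- a.e. lifts of kernel facts to ν
  have hliftB : ∀ (P : B → Prop), (∀ᵐ b ∂μB, P b) → ∀ᵐ p : B × D ∂ν, P p.1 := by
    intro P hP
    exact ae_of_ae_map (p := P) measurable_fst.aemeasurable (by rw [hν1]; exact hP)
  have hliftD : ∀ (P : D → Prop), (∀ᵐ d ∂μD, P d) → ∀ᵐ p : B × D ∂ν, P p.2 := by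
    intro P hP
    exact ae_of_ae_map (p := P) measurable_snd.aemeasurable (by rw [hν2]; exact hP)
  refine ⟨ν', ⟨hν'prob, ?_, ?_, ?_⟩, ?_⟩
  · -- invariance
    intro g
    have hΦm : Measurable (fun p : A × C => (TA g p.1, TC g p.2)) :=
      ((hTAcont g).measurable.comp measurable_fst).prodMk
        ((hTCcont g).measurable.comp measurable_snd)
    refine ⟨hΦm, ?_⟩
    ext s hs
    rw [Measure.map_apply hΦm hs, hν'app _ (hΦm hs), hν'app _ hs]
    have step1 : ∀ p : B × D, (κA p.1).prod (κC p.2)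
        ((fun p : A × C => (TA g p.1, TC g p.2)) ⁻¹' s)
        = (((κA p.1).map (TA g)).prod ((κC p.2).map (TC g))) s := by
      intro p
      rw [Measure.map_prod_map _ _ (hTAμ g).measurable (hTCμ g).measurable,
        Measure.map_apply ((hTAμ g).measurable.prodMap (hTCμ g).measurable) hs]
      rfl
    simp_rw [step1]
    have step2 : ∀ᵐ p : B × D ∂ν,
        (((κA p.1).map (TA g)).prod ((κC p.2).map (TC g))) s
          = (κA (TB g p.1)).prod (κC (TD g p.2)) s := by
      filter_upwards [hliftB _ (hκAequiv g), hliftD _ (hκCequiv g)] with p h1 h2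
      rw [h1, h2]
    rw [lintegral_congr_ae step2]
    have hψm : Measurable (fun p : B × D => (TB g p.1, TD g p.2)) :=
      ((hTBcont g).measurable.comp measurable_fst).prodMk
        ((hTDcont g).measurable.comp measurable_snd)
    have hF : Measurable (fun p : B × D => (κA p.1).prod (κC p.2) s) := by
      have := Kernel.measurable_coe k hs
      simpa only [hkapp] using this
    calc ∫⁻ p : B × D, (κA (TB g p.1)).prod (κC (TD g p.2)) s ∂ν
        = ∫⁻ p, (κA p.1).prod (κC p.2) s ∂(ν.map (fun p : B × D => (TB g p.1, TD g p.2))) := by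
          rw [lintegral_map hF hψm]
      _ = ∫⁻ p, (κA p.1).prod (κC p.2) s ∂ν := by rw [(hνinv g).map_eq]
  · -- first marginal
    ext s hs
    rw [Measure.map_apply measurable_fst hs, hν'app _ (measurable_fst hs)]
    have : ∀ p : B × D, (κA p.1).prod (κC p.2) (Prod.fst ⁻¹' s) = κA p.1 s := by
      intro p
      have : Prod.fst ⁻¹' s = s ×ˢ (Set.univ : Set C) := by
        ext x; simp
      rw [this, Measure.prod_prod]
      simp
    simp_rw [this]
    rw [← hκAint s hs, ← hν1, lintegral_map (Kernel.measurable_coe κA hs) measurable_fst]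
  · -- second marginal
    ext s hs
    rw [Measure.map_apply measurable_snd hs, hν'app _ (measurable_snd hs)]
    have : ∀ p : B × D, (κA p.1).prod (κC p.2) (Prod.snd ⁻¹' s) = κC p.2 s := by
      intro p
      have : Prod.snd ⁻¹' s = (Set.univ : Set A) ×ˢ s := by
        ext x; simp
      rw [this, Measure.prod_prod]
      simp
    simp_rw [this]
    rw [← hκCint s hs, ← hν2, lintegral_map (Kernel.measurable_coe κC hs) measurable_snd]
  · -- pushforward is ν
    ext s hs
    have hπm : Measurable (Prod.map πAB πCD) := hπABm.prodMap hπCDm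
    rw [Measure.map_apply hπm hs, hν'app _ (hπm hs)]
    have step1 : ∀ p : B × D, (κA p.1).prod (κC p.2) (Prod.map πAB πCD ⁻¹' s)
        = (((κA p.1).map πAB).prod ((κC p.2).map πCD)) s := by
      intro p
      rw [Measure.map_prod_map _ _ hπABm hπCDm, Measure.map_apply hπm hs]
    simp_rw [step1]
    have step2 : ∀ᵐ p : B × D ∂ν,
        (((κA p.1).map πAB).prod ((κC p.2).map πCD)) s = Measure.dirac p s := by
      filter_upwards [hliftB _ hκAproj, hliftD _ hκCproj] with p h1 h2
      rw [h1, h2, Measure.dirac_prod_dirac]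
    rw [lintegral_congr_ae step2]
    have : ∀ p : B × D, Measure.dirac p s = s.indicator 1 p := fun p =>
      Measure.dirac_apply' p hs
    simp_rw [this]
    rw [lintegral_indicator_one hs]
end
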